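/- For the standard quaternion-Kähler 4-form Ω on ℝ^8 and α = dx₂₈+dx₃₅, β = dx₁₅−dx₂₆ (both in Λ²₁₅), one has (α⋄Ω) ⌟₃ (β⋄Ω) = 32(−dx₁₃ + dx₆₈). -/
import Mathlib


/- STATEMENT 7: For the standard QK 4-form Ω on ℝ^8 and α = dx₂₈+dx₃₅, β = dx₁₅−dx₂₆
(both in Λ²₁₅), one has (α⋄Ω) ⌟₃ (β⋄Ω) = 32(−dx₁₃ + dx₆₈)
(indices shifted down by one in the formalization). -/

noncomputable section
open ExteriorAlgebra

/-- The standard coordinate 1-forms dx₁,…,dx₈ (indexed 0,…,7), modelled in the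
exterior algebra of (ℝ^8)* ≅ ℝ^8. -/
def dx (i : Fin 8) : ExteriorAlgebra ℝ (Fin 8 → ℝ) :=
  ExteriorAlgebra.ι ℝ (Pi.single i 1)

def ω₁ : ExteriorAlgebra ℝ (Fin 8 → ℝ) :=
  dx 0 * dx 1 + dx 2 * dx 3 + dx 4 * dx 5 + dx 6 * dx 7

def ω₂ : ExteriorAlgebra ℝ (Fin 8 → ℝ) :=
  dx 0 * dx 2 - dx 1 * dx 3 + dx 4 * dx 6 - dx 5 * dx 7

def ω₃ : ExteriorAlgebra ℝ (Fin 8 → ℝ) :=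
  dx 0 * dx 3 + dx 1 * dx 2 + dx 4 * dx 7 + dx 5 * dx 6

/-- The standard quaternion-Kähler 4-form Ω = ½(ω₁²+ω₂²+ω₃²). -/
def Ω : ExteriorAlgebra ℝ (Fin 8 → ℝ) :=
  (1/2 : ℝ) • (ω₁ * ω₁ + ω₂ * ω₂ + ω₃ * ω₃)

/-- The standard volume form dx₁∧⋯∧dx₈. -/
def vol8 : ExteriorAlgebra ℝ (Fin 8 → ℝ) :=
  dx 0 * dx 1 * dx 2 * dx 3 * dx 4 * dx 5 * dx 6 * dx 7

/-- Wedge product of the coordinate 1-forms indexed by a finite set, taken in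
increasing order. -/
def wedgeOf (s : Finset (Fin 8)) : ExteriorAlgebra ℝ (Fin 8 → ℝ) :=
  ((s.sort (· ≤ ·)).map dx).prod

/-- `IsHodgeStar star` says that the linear map `star` is the Hodge star operator of the
Euclidean metric and the standard orientation on ℝ^8: on each increasing basis monomial
dx_S it equals ±dx_{Sᶜ}, with the sign fixed by dx_S ∧ ⋆(dx_S) = dx₁∧⋯∧dx₈ (since the
basis monomials are orthonormal).  This characterizes ⋆ uniquely. -/
def IsHodgeStar
    (star : ExteriorAlgebra ℝ (Fin 8 → ℝ) →ₗ[ℝ] ExteriorAlgebra ℝ (Fin 8 → ℝ)) : Prop :=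
  ∀ s : Finset (Fin 8), ∃ ε : ℝ, (ε = 1 ∨ ε = -1) ∧
    star (wedgeOf s) = ε • wedgeOf sᶜ ∧
    wedgeOf s * star (wedgeOf s) = wedgeOf Finset.univ

/-- Interior product (contraction) with the i-th standard basis vector of ℝ^8;
via the Euclidean metric this is left contraction with the i-th coordinate functional. -/
def ctr (i : Fin 8) :
    ExteriorAlgebra ℝ (Fin 8 → ℝ) →ₗ[ℝ] ExteriorAlgebra ℝ (Fin 8 → ℝ) :=
  CliffordAlgebra.contractLeft (LinearMap.proj i)

/-- The diamond action of the simple 2-form dxᵢ∧dxⱼ on a form φ: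
(a∧b)⋄φ := a∧(b♯⌟φ) − b∧(a♯⌟φ), where ♯ is the Euclidean sharp. -/
def dia2 (i j : Fin 8) (φ : ExteriorAlgebra ℝ (Fin 8 → ℝ)) :
    ExteriorAlgebra ℝ (Fin 8 → ℝ) :=
  dx i * ctr j φ - dx j * ctr i φ

/-- `IsTripleContractionInto κ T3` says that the linear map `T3` is the triple
contraction operator σ ↦ σ ⌟₃ κ on 4-forms: on simple 4-forms a₁∧a₂∧a₃∧a₄ it is
a₁∧(a₂♯⌟a₃♯⌟a₄♯⌟κ) − a₂∧(a₁♯⌟a₃♯⌟a₄♯⌟κ) + a₃∧(a₁♯⌟a₂♯⌟a₄♯⌟κ) − a₄∧(a₁♯⌟a₂♯⌟a₃♯⌟κ),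
which (with linearity) determines it on all of Λ⁴. -/
def IsTripleContractionInto (κ : ExteriorAlgebra ℝ (Fin 8 → ℝ))
    (T3 : ExteriorAlgebra ℝ (Fin 8 → ℝ) →ₗ[ℝ] ExteriorAlgebra ℝ (Fin 8 → ℝ)) : Prop :=
  ∀ i j k l : Fin 8,
    T3 (dx i * dx j * dx k * dx l) =
      dx i * ctr j (ctr k (ctr l κ)) - dx j * ctr i (ctr k (ctr l κ))
        + dx k * ctr i (ctr j (ctr l κ)) - dx l * ctr i (ctr j (ctr k κ))


lemma dx_sq (i : Fin 8) : dx i * dx i = 0 := ExteriorAlgebra.ι_sq_zero _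
lemma dx_sq' (i : Fin 8) (x) : dx i * (dx i * x) = 0 := by
  rw [← mul_assoc, dx_sq, zero_mul]
lemma dx_swap (i j : Fin 8) (_h : j < i) : dx i * dx j = -(dx j * dx i) := by
  have := ExteriorAlgebra.ι_add_mul_swap (R := ℝ) (M := Fin 8 → ℝ)
    (Pi.single i 1) (Pi.single j 1)
  rw [← dx, ← dx] at this
  exact eq_neg_of_add_eq_zero_left this
lemma dx_swap' (i j : Fin 8) (h : j < i) (x) : dx i * (dx j * x) = -(dx j * (dx i * x)) := by
  rw [← mul_assoc, dx_swap i j h, ← mul_assoc, neg_mul]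
lemma ctr_one (i : Fin 8) : ctr i 1 = 0 := CliffordAlgebra.contractLeft_one _ _
lemma ctr_dx_mul_same (i : Fin 8) (x) : ctr i (dx i * x) = x - dx i * ctr i x := by
  rw [ctr, dx, CliffordAlgebra.contractLeft_ι_mul]
  simp
lemma ctr_dx_mul_ne (i j : Fin 8) (h : j ≠ i) (x) : ctr i (dx j * x) = -(dx j * ctr i x) := by
  rw [ctr, dx, CliffordAlgebra.contractLeft_ι_mul]
  simp [Pi.single_apply, h]
lemma ctr_dx_same (i : Fin 8) : ctr i (dx i) = 1 := by
  rw [ctr, dx, CliffordAlgebra.contractLeft_ι]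
  simp
lemma ctr_dx_ne (i j : Fin 8) (h : j ≠ i) : ctr i (dx j) = 0 := by
  rw [ctr, dx, CliffordAlgebra.contractLeft_ι]
  simp [Pi.single_apply, h]

set_option maxHeartbeats 4000000 in
lemma hA_aux : dia2 1 7 Ω + dia2 2 4 Ω =
    (4:ℝ) • (dx 0 * dx 1 * dx 3 * dx 4) + (-4:ℝ) • (dx 0 * dx 2 * dx 3 * dx 7)
      + (-4:ℝ) • (dx 1 * dx 4 * dx 5 * dx 6) + (4:ℝ) • (dx 2 * dx 5 * dx 6 * dx 7) := by
  simp (config := { decide := true }) only [dia2, Ω, ω₁, ω₂, ω₃, smul_add, map_add, map_sub,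
    map_smul, map_neg, map_zero, mul_add, add_mul, mul_sub, sub_mul, neg_mul, mul_neg, neg_neg,
    smul_mul_assoc, mul_smul_comm, mul_assoc, mul_one, one_mul,
    ctr_dx_mul_same, ctr_dx_mul_ne, ctr_dx_same, ctr_dx_ne, ctr_one,
    dx_sq', dx_sq, dx_swap', dx_swap,
    mul_zero, zero_mul, smul_zero, add_zero, zero_add, sub_zero, zero_sub, neg_zero,
    smul_neg, smul_smul]
  module

set_option maxHeartbeats 4000000 in
lemma hK_aux : dia2 0 4 Ω - dia2 1 5 Ω =
    (4:ℝ) • (dx 0 * dx 2 * dx 3 * dx 5) + (4:ℝ) • (dx 0 * dx 5 * dx 6 * dx 7)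
      + (4:ℝ) • (dx 1 * dx 2 * dx 3 * dx 4) + (4:ℝ) • (dx 1 * dx 4 * dx 6 * dx 7) := by
  simp (config := { decide := true }) only [dia2, Ω, ω₁, ω₂, ω₃, smul_add, map_add, map_sub,
    map_smul, map_neg, map_zero, mul_add, add_mul, mul_sub, sub_mul, neg_mul, mul_neg, neg_neg,
    smul_mul_assoc, mul_smul_comm, mul_assoc, mul_one, one_mul,
    ctr_dx_mul_same, ctr_dx_mul_ne, ctr_dx_same, ctr_dx_ne, ctr_one,
    dx_sq', dx_sq, dx_swap', dx_swap,
    mul_zero, zero_mul, smul_zero, add_zero, zero_add, sub_zero, zero_sub, neg_zero,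
    smul_neg, smul_smul]
  module

theorem stmt_7
    (T3 : ExteriorAlgebra ℝ (Fin 8 → ℝ) →ₗ[ℝ] ExteriorAlgebra ℝ (Fin 8 → ℝ))
    (hT3 : IsTripleContractionInto (dia2 0 4 Ω - dia2 1 5 Ω) T3) :
    T3 (dia2 1 7 Ω + dia2 2 4 Ω) = (32 : ℝ) • (-(dx 0 * dx 2) + dx 5 * dx 7) := by
  rw [hA_aux, map_add, map_add, map_add, map_smul, map_smul, map_smul, map_smul,
    hT3 0 1 3 4, hT3 0 2 3 7, hT3 1 4 5 6, hT3 2 5 6 7]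
  rw [hK_aux]
  simp (config := { decide := true }) only [smul_add, map_add, map_sub,
    map_smul, map_neg, map_zero, mul_add, add_mul, mul_sub, sub_mul, neg_mul, mul_neg, neg_neg,
    smul_mul_assoc, mul_smul_comm, mul_assoc, mul_one, one_mul,
    ctr_dx_mul_same, ctr_dx_mul_ne, ctr_dx_same, ctr_dx_ne, ctr_one,
    dx_sq', dx_sq, dx_swap', dx_swap,
    mul_zero, zero_mul, smul_zero, add_zero, zero_add, sub_zero, zero_sub, neg_zero,
    smul_neg, smul_smul]
  module

end
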